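/- (Polynomial bound on ForNo computations.) For every term T of ForNo there exists a polynomial q over ℕ such that, for every state ω = (φ, c) and every ω' with ⟨T, ω⟩ ⇓ ω': (a) the (unique) derivation of ⟨T, ω⟩ ⇓ ω' contains at most q(N) applications of inference rules, and (b) the sum of the lengths of the stacks ω'(x) over the registers x occurring in T is at most q(N), where N is the sum of the lengths of the stacks ω(x) over the registers x occurring in T. -/
import Mathlib


set_option linter.unusedVariables false

namespace ForNo

/-- Registers. -/
abbrev Reg := ℕ
/-- Stacks of natural numbers; the head is the top. -/
abbrev Stack := List ℕ
/-- Stores map registers to stacks. -/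
abbrev Store := Reg → Stack
/-- A state is a store together with an error counter. -/
abbrev FState := Store × ℕ

/-- The store mapping every register to the empty stack. -/
def emptyStore : Store := fun _ => []

/-- Store update. -/
def upd (φ : Store) (x : Reg) (s : Stack) : Store := fun y => if y = x then s else φ y

/-- Counter-guarded push operation. -/
def pushOp (n : ℕ) : Stack × ℕ → Stack × ℕ
  | (s, 0) => (n :: s, 0)
  | (s, c + 1) => if s.head? = some n then (s, c + 1) else (s, c)

/-- Counter-guarded pop operation. -/
def popOp (n : ℕ) : Stack × ℕ → Stack × ℕ
  | (s, c) =>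
      if s.head? = some n then
        match c with
        | 0 => (s.tail, 0)
        | c + 1 => (s, c + 1)
      else (s, c + 1)

mutual
  /-- Terms of the (raw) language. -/
  inductive Term : Type where
    | skip : Term
    | push : ℕ → Reg → Term
    | pop : ℕ → Reg → Term
    | seq : Term → Term → Term
    | ifeq : Reg → ℕ → Term → Term
    | normal : List Reg → Term → Term
    | fort : Reg → Bodies → Term
    | roft : Reg → Bodies → Term
  /-- Nonempty lists of iteration bodies. -/
  inductive Bodies : Type where
    | single : Term → Bodies
    | cons : Term → Bodies → Bodies
end

/-- `ps.get i` is `P_min(i,m)` where `ps = P₀ … P_m`. -/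
def Bodies.get : Bodies → ℕ → Term
  | .single t, _ => t
  | .cons t _, 0 => t
  | .cons _ ps, i + 1 => ps.get i

mutual
  /-- Big-step operational semantics `⟨T, ω⟩ ⇓ ω'`. -/
  inductive Eval : Term → FState → FState → Prop where
    | skip : ∀ ω, Eval .skip ω ω
    | seq : ∀ {t u : Term} {ω ω' ω'' : FState},
        Eval t ω ω' → Eval u ω' ω'' → Eval (.seq t u) ω ω''
    | push : ∀ (n : ℕ) (x : Reg) (φ : Store) (c : ℕ),
        Eval (.push n x) (φ, c) (upd φ x (pushOp n (φ x, c)).1, (pushOp n (φ x, c)).2)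
    | pop : ∀ (n : ℕ) (x : Reg) (φ : Store) (c : ℕ),
        Eval (.pop n x) (φ, c) (upd φ x (popOp n (φ x, c)).1, (popOp n (φ x, c)).2)
    | ifeq_true : ∀ {x n t} {φ : Store} {c : ℕ} {ω' : FState},
        (φ x).head? = some n → Eval t (φ, c) ω' → Eval (.ifeq x n t) (φ, c) ω'
    | ifeq_false : ∀ {x n t} (φ : Store) (c : ℕ),
        (φ x).head? ≠ some n → Eval (.ifeq x n t) (φ, c) (φ, c)
    | normal : ∀ {xs t ω ω'}, Eval t ω ω' → Eval (.normal xs t) ω ω'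
    | fort : ∀ {x ps ω ω'}, EvalList (ω.1 x) ps ω ω' → Eval (.fort x ps) ω ω'
    | roft : ∀ {x ps ω ω'}, EvalList (ω.1 x).reverse ps ω ω' → Eval (.roft x ps) ω ω'
  /-- Iteration judgment `⟦s, ps, ω⟧ ⇓ ω'`. -/
  inductive EvalList : Stack → Bodies → FState → FState → Prop where
    | nil : ∀ (ps : Bodies) (ω : FState), EvalList [] ps ω ω
    | cons : ∀ {i : ℕ} {t : Stack} {ps : Bodies} {ω ω'' ω' : FState},
        Eval (ps.get i) ω ω'' → EvalList t ps ω'' ω' → EvalList (i :: t) ps ω ω'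
end

mutual
  /-- The inversion map `−(·)` on terms. -/
  def Term.inv : Term → Term
    | .skip => .skip
    | .push n x => .pop n x
    | .pop n x => .push n x
    | .seq t u => .seq u.inv t.inv
    | .ifeq x n t => .ifeq x n t.inv
    | .normal xs t => .normal xs t.inv
    | .fort x ps => .roft x ps.inv
    | .roft x ps => .fort x ps.inv
  def Bodies.inv : Bodies → Bodies
    | .single t => .single t.inv
    | .cons t ps => .cons t.inv ps.inv
end

mutual
  /-- `t.Writes y` holds iff some `PUSH`/`POP` occurring in `t` writes register `y`. -/
  def Term.Writes : Term → Reg → Prop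
    | .skip, _ => False
    | .push _ x, y => x = y
    | .pop _ x, y => x = y
    | .seq t u, y => t.Writes y ∨ u.Writes y
    | .ifeq _ _ t, y => t.Writes y
    | .normal _ t, y => t.Writes y
    | .fort _ ps, y => ps.Writes y
    | .roft _ ps, y => ps.Writes y
  def Bodies.Writes : Bodies → Reg → Prop
    | .single t, y => t.Writes y
    | .cons t ps, y => t.Writes y ∨ ps.Writes y
end

mutual
  /-- `t.Leads y` holds iff `y` leads some `FOR`/`ROF` iteration occurring in `t`. -/
  def Term.Leads : Term → Reg → Prop
    | .skip, _ => False
    | .push _ _, _ => False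
    | .pop _ _, _ => False
    | .seq t u, y => t.Leads y ∨ u.Leads y
    | .ifeq _ _ t, y => t.Leads y
    | .normal _ t, y => t.Leads y
    | .fort x ps, y => x = y ∨ ps.Leads y
    | .roft x ps, y => x = y ∨ ps.Leads y
  def Bodies.Leads : Bodies → Reg → Prop
    | .single t, y => t.Leads y
    | .cons t ps, y => t.Leads y ∨ ps.Leads y
end

mutual
  /-- `t.Mentions y` holds iff register `y` occurs in `t`. -/
  def Term.Mentions : Term → Reg → Prop
    | .skip, _ => False
    | .push _ x, y => x = y
    | .pop _ x, y => x = y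
    | .seq t u, y => t.Mentions y ∨ u.Mentions y
    | .ifeq x _ t, y => x = y ∨ t.Mentions y
    | .normal xs t, y => y ∈ xs ∨ t.Mentions y
    | .fort x ps, y => x = y ∨ ps.Mentions y
    | .roft x ps, y => x = y ∨ ps.Mentions y
  def Bodies.Mentions : Bodies → Reg → Prop
    | .single t, y => t.Mentions y
    | .cons t ps, y => t.Mentions y ∨ ps.Mentions y
end

mutual
  /-- The finite set of registers occurring in a term. -/
  def Term.regs : Term → Finset Reg
    | .skip => ∅
    | .push _ x => {x}
    | .pop _ x => {x}
    | .seq t u => t.regs ∪ u.regs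
    | .ifeq x _ t => insert x t.regs
    | .normal xs t => xs.toFinset ∪ t.regs
    | .fort x ps => insert x ps.regs
    | .roft x ps => insert x ps.regs
  def Bodies.regs : Bodies → Finset Reg
    | .single t => t.regs
    | .cons t ps => t.regs ∪ ps.regs
end

mutual
  /-- Safe terms: generated by the grammar `S` (no `NORMAL`). -/
  def Term.Safe : Term → Prop
    | .skip => True
    | .push _ _ => True
    | .pop _ _ => True
    | .seq t u => t.Safe ∧ u.Safe
    | .ifeq _ _ t => t.Safe
    | .normal _ _ => False
    | .fort _ ps => ps.Safe
    | .roft _ ps => ps.Safe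
  def Bodies.Safe : Bodies → Prop
    | .single t => t.Safe
    | .cons t ps => t.Safe ∧ ps.Safe
end

/-- Raw terms: generated by the grammar `T` (iterations only inside `NORMAL` bodies,
which must be safe). -/
def Term.Raw : Term → Prop
  | .skip => True
  | .push _ _ => True
  | .pop _ _ => True
  | .seq t u => t.Raw ∧ u.Raw
  | .ifeq _ _ t => t.Raw
  | .normal _ t => t.Safe
  | .fort _ _ => False
  | .roft _ _ => False

mutual
  /-- The read-only constraints (i) and (ii) defining membership in ForNo. -/
  def Term.WF : Term → Prop
    | .skip => True
    | .push _ _ => True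
    | .pop _ _ => True
    | .seq t u => t.WF ∧ u.WF
    | .ifeq x _ t => t.WF ∧ ¬ t.Writes x
    | .normal xs t => t.WF ∧ (∀ x ∈ xs, ¬ t.Writes x) ∧ (∀ y, t.Leads y → y ∈ xs)
    | .fort x ps => ps.WF ∧ ¬ ps.Writes x
    | .roft x ps => ps.WF ∧ ¬ ps.Writes x
  def Bodies.WF : Bodies → Prop
    | .single t => t.WF
    | .cons t ps => t.WF ∧ ps.WF
end

/-- A raw term is in ForNo if it satisfies the read-only constraints. -/
def InForNo (t : Term) : Prop := t.Raw ∧ t.WF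

/-- `iterSeq t k` is the `k`-fold sequential composition `t;…;t` (`SKIP` for `k = 0`). -/
def iterSeq (t : Term) : ℕ → Term
  | 0 => .skip
  | 1 => t
  | n + 2 => .seq t (iterSeq t (n + 1))

/-- `mkBodiesAux g i k` is the list of bodies `g i, g (i+1), …, g (i+k)`. -/
def mkBodiesAux (g : ℕ → Term) : ℕ → ℕ → Bodies
  | i, 0 => .single (g i)
  | i, k + 1 => .cons (g i) (mkBodiesAux g (i + 1) k)

/-- `mkBodies g k` is the list of bodies `g 0, g 1, …, g k`. -/
def mkBodies (g : ℕ → Term) (k : ℕ) : Bodies := mkBodiesAux g 0 k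

/-- `COPY(x,y)` with bodies `PUSH[0] y, …, PUSH[k] y`. -/
def COPY (x y : Reg) (k : ℕ) : Term :=
  .normal [x] (.roft x (mkBodies (fun i => .push i y) k))

/-- `n` nested `FOR rgt` iterations around `PUSH[1] p`. -/
def powNest (rgt p : Reg) : ℕ → Term
  | 0 => .push 1 p
  | n + 1 => .fort rgt (.single (powNest rgt p n))

/-- The term `POW^n`. -/
def POW (rgt p : Reg) (n : ℕ) : Term := .normal [rgt] (powNest rgt p n)

/-- The term `REMOVE-BLANKS` for tape alphabet codes `{0,…,n−1}` and
input alphabet codes `{0,…,m−1}`. -/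
def REMOVEBLANKS (rgt g1 : Reg) (n m : ℕ) : Term :=
  .seq (.normal [rgt] (.roft rgt (mkBodies (fun i => .push i g1) (n - 1))))
       (.normal [g1]
         (.seq (.fort g1 (mkBodies (fun i => .pop i rgt) (n - 1)))
               (.roft g1 (mkBodies (fun i => if i < m then .push i rgt else .skip) m))))

mutual
  /-- Big-step semantics instrumented with the number of rule applications
  in the derivation. -/
  inductive EvalN : ℕ → Term → FState → FState → Prop where
    | skip : ∀ ω, EvalN 1 .skip ω ω
    | seq : ∀ {k l : ℕ} {t u : Term} {ω ω' ω'' : FState},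
        EvalN k t ω ω' → EvalN l u ω' ω'' → EvalN (k + l + 1) (.seq t u) ω ω''
    | push : ∀ (n : ℕ) (x : Reg) (φ : Store) (c : ℕ),
        EvalN 1 (.push n x) (φ, c) (upd φ x (pushOp n (φ x, c)).1, (pushOp n (φ x, c)).2)
    | pop : ∀ (n : ℕ) (x : Reg) (φ : Store) (c : ℕ),
        EvalN 1 (.pop n x) (φ, c) (upd φ x (popOp n (φ x, c)).1, (popOp n (φ x, c)).2)
    | ifeq_true : ∀ {k x n t} {φ : Store} {c : ℕ} {ω' : FState},
        (φ x).head? = some n → EvalN k t (φ, c) ω' → EvalN (k + 1) (.ifeq x n t) (φ, c) ω'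
    | ifeq_false : ∀ {x n t} (φ : Store) (c : ℕ),
        (φ x).head? ≠ some n → EvalN 1 (.ifeq x n t) (φ, c) (φ, c)
    | normal : ∀ {k xs t ω ω'}, EvalN k t ω ω' → EvalN (k + 1) (.normal xs t) ω ω'
    | fort : ∀ {k x ps ω ω'}, EvalListN k (ω.1 x) ps ω ω' → EvalN (k + 1) (.fort x ps) ω ω'
    | roft : ∀ {k x ps ω ω'}, EvalListN k (ω.1 x).reverse ps ω ω' → EvalN (k + 1) (.roft x ps) ω ω'
  inductive EvalListN : ℕ → Stack → Bodies → FState → FState → Prop where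
    | nil : ∀ (ps : Bodies) (ω : FState), EvalListN 1 [] ps ω ω
    | cons : ∀ {k l : ℕ} {i : ℕ} {t : Stack} {ps : Bodies} {ω ω'' ω' : FState},
        EvalN k (ps.get i) ω ω'' → EvalListN l t ps ω'' ω' →
        EvalListN (k + l + 1) (i :: t) ps ω ω'
end

/-! ### Turing machines -/

/-- Deterministic one-tape Turing machines with a semi-infinite tape, input/output
alphabet `S` embedded in the tape alphabet `Γ`, and direction `Bool`
(`false` = left, `true` = right). -/
structure TM (S : Type) where
  Q : Type
  finQ : Fintype Q
  q0 : Q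
  qhalt : Q
  Γ : Type
  finΓ : Fintype Γ
  decΓ : DecidableEq Γ
  blank : Γ
  embed : S → Γ
  embed_inj : Function.Injective embed
  blank_notin : ∀ a, embed a ≠ blank
  δ : Q → Γ → Q × Γ × Bool

namespace TM

variable {S : Type}

/-- Configurations `(u, q, v)`: left tape part (nearest cell first), current state,
right tape part starting with the scanned cell (no trailing blanks). -/
abbrev Config (M : TM S) : Type := List M.Γ × M.Q × List M.Γ

/-- Remove the trailing blanks of a list. -/
def trim (M : TM S) (l : List M.Γ) : List M.Γ :=
  letI := M.decΓ
  (l.reverse.dropWhile (fun a => decide (a = M.blank))).reverse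

/-- The single-step transition function. -/
def stepFn (M : TM S) (c : M.Config) : M.Config :=
  let u := c.1
  let q := c.2.1
  let v := c.2.2
  let a := v.headD M.blank
  let r := M.δ q a
  if r.2.2 then (r.2.1 :: u, r.1, v.tail)
  else (u.tail, r.1, M.trim (u.headD M.blank :: r.2.1 :: v.tail))

/-- Single-step transition relation `c ⇝ c'`. -/
def Step (M : TM S) (c c' : M.Config) : Prop := c.2.1 ≠ M.qhalt ∧ c' = M.stepFn c

/-- `n`-step transition relation `c ⇝ⁿ c'`. -/
def Steps (M : TM S) : ℕ → M.Config → M.Config → Prop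
  | 0 => fun c c' => c = c'
  | n + 1 => fun c c'' => ∃ c', M.Step c c' ∧ M.Steps n c' c''

/-- The initial configuration on input `w`. -/
def init (M : TM S) (w : List S) : M.Config := ([], M.q0, w.map M.embed)

/-- `M` is a polynomial-time Turing machine. -/
def PTime (M : TM S) : Prop :=
  ∃ a b : ℕ, 0 < a ∧ 0 < b ∧ ∀ w : List S,
    ∃ k ≤ a * w.length ^ b, ∃ c : M.Config, M.Steps k (M.init w) c ∧ c.2.1 = M.qhalt

end TM

/-- `f` is computable in polynomial time. -/
def FPTime {S : Type} (f : List S → List S) : Prop :=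
  ∃ M : TM S, M.PTime ∧
    ∀ w : List S, ∃ k : ℕ, M.Steps k (M.init w) ([], M.qhalt, (f w).map M.embed)

/-- `f` is honest: the input length is polynomially bounded in the output length. -/
def Honest {S : Type} (f : List S → List S) : Prop :=
  ∃ q : Polynomial ℕ, ∀ x : List S, x.length ≤ q.eval (f x).length

/-! ### Encodings and computed functions -/

/-- An encoding of a finite alphabet `S`: a bijection onto `{0, …, |S| − 1}`. -/
structure Encoding (S : Type) [Fintype S] where
  enc : S → ℕ
  inj : Function.Injective enc
  lt : ∀ a, enc a < Fintype.card S

/-- Encoding of strings as stacks. -/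
def Encoding.encStr {S : Type} [Fintype S] (e : Encoding S) (w : List S) : Stack :=
  w.map e.enc

/-- `T` (with input register `rin` and output register `rout`) computes `f`. -/
def Computes {S : Type} [Fintype S] (e : Encoding S) (T : Term) (rin rout : Reg)
    (f : List S → List S) : Prop :=
  ∀ x : List S, ∃ φ : Store,
    Eval T (upd emptyStore rin (e.encStr x), 0) (φ, 0) ∧ φ rout = e.encStr (f x)

/-- `T` computes `f` with zero-garbage. -/
def ComputesZG {S : Type} [Fintype S] (e : Encoding S) (T : Term) (rin rout : Reg)
    (f : List S → List S) : Prop :=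
  ∀ x : List S, ∃ φ : Store,
    Eval T (upd emptyStore rin (e.encStr x), 0) (φ, 0) ∧ φ rout = e.encStr (f x) ∧
    ∀ y : Reg, y ≠ rout → φ y = []

/-! ### Simulation of Turing machines -/

/-- The register holding the left part of the tape. -/
def lftR : Reg := 0
/-- The register holding the current state. -/
def qR : Reg := 1
/-- The register holding the right part of the tape. -/
def rgtR : Reg := 2

/-- `σ` simulates configuration `c` (written `σ ≈ c`). -/
def Sim {S : Type} (M : TM S) (encΓ : M.Γ → ℕ) (encQ : M.Q → ℕ)
    (σ : FState) (c : M.Config) : Prop :=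
  σ.2 = 0 ∧
  σ.1 lftR = c.1.map encΓ ∧
  (σ.1 qR).head? = some (encQ c.2.1) ∧
  ∃ bs : Stack, (∀ b ∈ bs, b = encΓ M.blank) ∧ σ.1 rgtR = c.2.2.map encΓ ++ bs

/-- `σ` cleanly simulates configuration `c` (written `σ ≅ c`). -/
def SimClean {S : Type} (M : TM S) (encΓ : M.Γ → ℕ) (encQ : M.Q → ℕ)
    (σ : FState) (c : M.Config) : Prop :=
  σ.2 = 0 ∧
  σ.1 lftR = c.1.map encΓ ∧
  (σ.1 qR).head? = some (encQ c.2.1) ∧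
  σ.1 rgtR = c.2.2.map encΓ

/-- The hypotheses of the simulation setup: `encΓ` is a bijection of `Γ` onto
`{0,…,n−1}` giving non-input characters larger codes than input characters,
and `encQ` is an injective encoding of states. -/
def SimSetup {S : Type} (M : TM S) (encΓ : M.Γ → ℕ) (encQ : M.Q → ℕ) : Prop :=
  Function.Injective encΓ ∧
  (∀ a : M.Γ, encΓ a < @Fintype.card M.Γ M.finΓ) ∧
  (∀ a : M.Γ, (∀ s : S, M.embed s ≠ a) → ∀ s : S, encΓ (M.embed s) < encΓ a) ∧
  Function.Injective encQ

/-! ### Auxiliary development for the polynomial bound -/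

mutual
  /-- Size bound for derivations, parameterized by a bound on loop registers. -/
  def Term.bnd : Term → ℕ → ℕ
    | .skip, _ => 1
    | .push _ _, _ => 1
    | .pop _ _, _ => 1
    | .seq t u, M => t.bnd M + u.bnd M + 1
    | .ifeq _ _ t, M => t.bnd M + 1
    | .normal _ t, M => t.bnd M + 1
    | .fort _ ps, M => M * (ps.bnd M + 1) + 2
    | .roft _ ps, M => M * (ps.bnd M + 1) + 2
  def Bodies.bnd : Bodies → ℕ → ℕ
    | .single t, M => t.bnd M
    | .cons t ps, M => max (t.bnd M) (ps.bnd M)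
end

theorem Bodies.get_writes : ∀ (ps : Bodies) (i y : ℕ), (ps.get i).Writes y → ps.Writes y
  | .single _, _, _, h => h
  | .cons _ _, 0, _, h => Or.inl h
  | .cons _ ps, i + 1, y, h => Or.inr (ps.get_writes i y h)

theorem Bodies.get_leads : ∀ (ps : Bodies) (i y : ℕ), (ps.get i).Leads y → ps.Leads y
  | .single _, _, _, h => h
  | .cons _ _, 0, _, h => Or.inl h
  | .cons _ ps, i + 1, y, h => Or.inr (ps.get_leads i y h)

theorem Bodies.get_bnd : ∀ (ps : Bodies) (i M : ℕ), (ps.get i).bnd M ≤ ps.bnd M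
  | .single _, _, _ => le_refl _
  | .cons _ _, 0, _ => le_max_left _ _
  | .cons _ ps, i + 1, M => le_trans (ps.get_bnd i M) (le_max_right _ _)

theorem pushOp_len (n : ℕ) (s : Stack) (c : ℕ) :
    ((pushOp n (s, c)).1).length ≤ s.length + 1 := by
  cases c with
  | zero => simp [pushOp]
  | succ c =>
    simp only [pushOp]
    split <;> simp [Nat.le_succ]

theorem popOp_len (n : ℕ) (s : Stack) (c : ℕ) :
    ((popOp n (s, c)).1).length ≤ s.length := by
  simp only [popOp]
  split
  · cases c with
    | zero =>
      show s.tail.length ≤ s.length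
      simp [List.length_tail]
    | succ c => exact le_refl _
  · exact le_refl _

mutual
theorem EvalN.unchanged : ∀ {k t ω ω'}, EvalN k t ω ω' →
    ∀ y, ¬ t.Writes y → ω'.1 y = ω.1 y
  | _, _, _, _, .skip _, _, _ => rfl
  | _, _, _, _, .seq h1 h2, y, hw =>
      (h2.unchanged y fun w => hw (Or.inr w)).trans (h1.unchanged y fun w => hw (Or.inl w))
  | _, _, _, _, .push n x φ c, y, hw => by
      show upd φ x _ y = φ y
      simp only [upd]
      exact if_neg fun e => hw e.symm
  | _, _, _, _, .pop n x φ c, y, hw => by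
      show upd φ x _ y = φ y
      simp only [upd]
      exact if_neg fun e => hw e.symm
  | _, _, _, _, .ifeq_true _ h, y, hw => h.unchanged y hw
  | _, _, _, _, .ifeq_false _ _ _, _, _ => rfl
  | _, _, _, _, .normal h, y, hw => h.unchanged y hw
  | _, _, _, _, .fort h, y, hw => h.unchanged y hw
  | _, _, _, _, .roft h, y, hw => h.unchanged y hw
theorem EvalListN.unchanged : ∀ {k s ps ω ω'}, EvalListN k s ps ω ω' →
    ∀ y, ¬ ps.Writes y → ω'.1 y = ω.1 y
  | _, _, _, _, _, .nil _ _, _, _ => rfl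
  | _, _, _, _, _, .cons (i := i) (ps := ps) h1 h2, y, hw =>
      (h2.unchanged y hw).trans (h1.unchanged y fun w => hw (ps.get_writes i y w))
end

mutual
theorem EvalN.growth : ∀ {k t ω ω'}, EvalN k t ω ω' →
    ∀ A : Finset Reg, (∑ x ∈ A, (ω'.1 x).length) ≤ (∑ x ∈ A, (ω.1 x).length) + k
  | _, _, _, _, .skip _, A => Nat.le_add_right _ _
  | _, _, _, _, .seq h1 h2, A => by
      have g1 := h1.growth A
      have g2 := h2.growth A
      omega
  | _, _, _, _, .push n x φ c, A => by
      calc ∑ y ∈ A, (upd φ x (pushOp n (φ x, c)).1 y).length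
          ≤ ∑ y ∈ A, ((φ y).length + if y = x then 1 else 0) := by
            apply Finset.sum_le_sum
            intro y hy
            by_cases hyx : y = x
            · subst hyx; simpa [upd] using pushOp_len n (φ y) c
            · simp [upd, hyx]
        _ ≤ (∑ y ∈ A, (φ y).length) + 1 := by
            rw [Finset.sum_add_distrib]
            have h := Finset.sum_ite_eq' A x (fun _ => (1 : ℕ))
            rw [h]
            split <;> simp
  | _, _, _, _, .pop n x φ c, A => by
      have : ∑ y ∈ A, (upd φ x (popOp n (φ x, c)).1 y).length ≤ ∑ y ∈ A, (φ y).length := by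
        apply Finset.sum_le_sum
        intro y hy
        by_cases hyx : y = x
        · subst hyx; simpa [upd] using popOp_len n (φ y) c
        · simp [upd, hyx]
      exact le_trans this (Nat.le_add_right _ _)
  | _, _, _, _, .ifeq_true _ h, A => by
      have := h.growth A; omega
  | _, _, _, _, .ifeq_false _ _ _, A => Nat.le_add_right _ _
  | _, _, _, _, .normal h, A => by
      have := h.growth A; omega
  | _, _, _, _, .fort h, A => by
      have := h.growth A; omega
  | _, _, _, _, .roft h, A => by
      have := h.growth A; omega
theorem EvalListN.growth : ∀ {k s ps ω ω'}, EvalListN k s ps ω ω' →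
    ∀ A : Finset Reg, (∑ x ∈ A, (ω'.1 x).length) ≤ (∑ x ∈ A, (ω.1 x).length) + k
  | _, _, _, _, _, .nil _ _, A => Nat.le_add_right _ _
  | _, _, _, _, _, .cons h1 h2, A => by
      have g1 := h1.growth A
      have g2 := h2.growth A
      omega
end

mutual
theorem EvalN.bnd_spec : ∀ {k t ω ω'}, EvalN k t ω ω' → ∀ (M : ℕ) (X : Reg → Prop),
    (∀ y, t.Leads y → X y) → (∀ y, X y → ¬ t.Writes y) →
    (∀ y, X y → (ω.1 y).length ≤ M) → k ≤ t.bnd M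
  | _, _, _, _, .skip _, M, X, _, _, _ => le_refl _
  | _, _, _, _, .seq h1 h2, M, X, hL, hW, hlen => by
      have b1 := h1.bnd_spec M X (fun y l => hL y (Or.inl l))
        (fun y hx w => hW y hx (Or.inl w)) hlen
      have b2 := h2.bnd_spec M X (fun y l => hL y (Or.inr l))
        (fun y hx w => hW y hx (Or.inr w))
        (fun y hx => by
          rw [h1.unchanged y (fun w => hW y hx (Or.inl w))]; exact hlen y hx)
      show _ ≤ _ + _ + 1
      omega
  | _, _, _, _, .push n x φ c, M, X, _, _, _ => le_refl _
  | _, _, _, _, .pop n x φ c, M, X, _, _, _ => le_refl _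
  | _, _, _, _, .ifeq_true _ h, M, X, hL, hW, hlen =>
      Nat.succ_le_succ (h.bnd_spec M X hL hW hlen)
  | _, _, _, _, .ifeq_false _ _ _, M, X, _, _, _ =>
      Nat.succ_le_succ (Nat.zero_le _)
  | _, _, _, _, .normal h, M, X, hL, hW, hlen =>
      Nat.succ_le_succ (h.bnd_spec M X hL hW hlen)
  | _, _, _, _, .fort (x := x) (ps := ps) h, M, X, hL, hW, hlen => by
      have hx : X x := hL x (Or.inl rfl)
      have hM := hlen x hx
      have b := h.bnd_spec M X (fun y l => hL y (Or.inr l))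
        (fun y hy w => hW y hy w) hlen
      show _ ≤ M * (ps.bnd M + 1) + 2
      have := Nat.mul_le_mul_right (ps.bnd M + 1) hM
      omega
  | _, _, _, _, .roft (x := x) (ps := ps) (ω := ω) h, M, X, hL, hW, hlen => by
      have hx : X x := hL x (Or.inl rfl)
      have hM := hlen x hx
      have b := h.bnd_spec M X (fun y l => hL y (Or.inr l))
        (fun y hy w => hW y hy w) hlen
      rw [List.length_reverse] at b
      show _ ≤ M * (ps.bnd M + 1) + 2
      have := Nat.mul_le_mul_right (ps.bnd M + 1) hM
      omega
theorem EvalListN.bnd_spec : ∀ {k s ps ω ω'}, EvalListN k s ps ω ω' →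
    ∀ (M : ℕ) (X : Reg → Prop),
    (∀ y, ps.Leads y → X y) → (∀ y, X y → ¬ ps.Writes y) →
    (∀ y, X y → (ω.1 y).length ≤ M) → k ≤ s.length * (ps.bnd M + 1) + 1
  | _, _, _, _, _, .nil _ _, M, X, _, _, _ => by simp
  | _, _, _, _, _, .cons (i := i) (t := s) (ps := ps) h1 h2, M, X, hL, hW, hlen => by
      have b1 := h1.bnd_spec M X (fun y l => hL y (ps.get_leads i y l))
        (fun y hx w => hW y hx (ps.get_writes i y w)) hlen
      have b1' := le_trans b1 (ps.get_bnd i M)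
      have b2 := h2.bnd_spec M X hL hW
        (fun y hx => by
          rw [h1.unchanged y (fun w => hW y hx (ps.get_writes i y w))]; exact hlen y hx)
      simp only [List.length_cons]
      have : (s.length + 1) * (ps.bnd M + 1) = s.length * (ps.bnd M + 1) + (ps.bnd M + 1) := by
        ring
      omega
end

mutual
theorem Term.bnd_poly : ∀ t : Term, ∃ a b : ℕ, 1 ≤ a ∧ 1 ≤ b ∧
    ∀ M, t.bnd M ≤ a * (M + 1) ^ b
  | .skip => ⟨1, 1, le_refl _, le_refl _, fun M => by simp [Term.bnd]⟩
  | .push _ _ => ⟨1, 1, le_refl _, le_refl _, fun M => by simp [Term.bnd]⟩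
  | .pop _ _ => ⟨1, 1, le_refl _, le_refl _, fun M => by simp [Term.bnd]⟩
  | .seq t u => by
      obtain ⟨a1, b1, ha1, hb1, H1⟩ := t.bnd_poly
      obtain ⟨a2, b2, ha2, hb2, H2⟩ := u.bnd_poly
      refine ⟨a1 + a2 + 1, max b1 b2, by omega, le_trans hb1 (le_max_left _ _), fun M => ?_⟩
      have e1 : (M + 1) ^ b1 ≤ (M + 1) ^ max b1 b2 :=
        Nat.pow_le_pow_right (by omega) (le_max_left _ _)
      have e2 : (M + 1) ^ b2 ≤ (M + 1) ^ max b1 b2 :=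
        Nat.pow_le_pow_right (by omega) (le_max_right _ _)
      have h1 := le_trans (H1 M) (Nat.mul_le_mul_left a1 e1)
      have h2 := le_trans (H2 M) (Nat.mul_le_mul_left a2 e2)
      have hp : 1 ≤ (M + 1) ^ max b1 b2 := Nat.one_le_pow _ _ (by omega)
      show t.bnd M + u.bnd M + 1 ≤ _
      nlinarith
  | .ifeq x n t => by
      obtain ⟨a, b, ha, hb, H⟩ := t.bnd_poly
      refine ⟨a + 1, b, by omega, hb, fun M => ?_⟩
      have hp : 1 ≤ (M + 1) ^ b := Nat.one_le_pow _ _ (by omega)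
      have h := H M
      show t.bnd M + 1 ≤ _
      nlinarith
  | .normal xs t => by
      obtain ⟨a, b, ha, hb, H⟩ := t.bnd_poly
      refine ⟨a + 1, b, by omega, hb, fun M => ?_⟩
      have hp : 1 ≤ (M + 1) ^ b := Nat.one_le_pow _ _ (by omega)
      have h := H M
      show t.bnd M + 1 ≤ _
      nlinarith
  | .fort x ps => by
      obtain ⟨a, b, ha, hb, H⟩ := ps.bnd_poly
      refine ⟨a + 1, b + 1, by omega, by omega, fun M => ?_⟩
      have hp : 1 ≤ (M + 1) ^ b := Nat.one_le_pow _ _ (by omega)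
      have h := H M
      show M * (ps.bnd M + 1) + 2 ≤ _
      have hpow : (M + 1) ^ (b + 1) = (M + 1) ^ b * (M + 1) := pow_succ _ _
      rw [hpow]
      nlinarith
  | .roft x ps => by
      obtain ⟨a, b, ha, hb, H⟩ := ps.bnd_poly
      refine ⟨a + 1, b + 1, by omega, by omega, fun M => ?_⟩
      have hp : 1 ≤ (M + 1) ^ b := Nat.one_le_pow _ _ (by omega)
      have h := H M
      show M * (ps.bnd M + 1) + 2 ≤ _
      have hpow : (M + 1) ^ (b + 1) = (M + 1) ^ b * (M + 1) := pow_succ _ _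
      rw [hpow]
      nlinarith
theorem Bodies.bnd_poly : ∀ ps : Bodies, ∃ a b : ℕ, 1 ≤ a ∧ 1 ≤ b ∧
    ∀ M, ps.bnd M ≤ a * (M + 1) ^ b
  | .single t => t.bnd_poly
  | .cons t ps => by
      obtain ⟨a1, b1, ha1, hb1, H1⟩ := t.bnd_poly
      obtain ⟨a2, b2, ha2, hb2, H2⟩ := ps.bnd_poly
      refine ⟨a1 + a2, max b1 b2, by omega, le_trans hb1 (le_max_left _ _), fun M => ?_⟩
      have e1 : (M + 1) ^ b1 ≤ (M + 1) ^ max b1 b2 :=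
        Nat.pow_le_pow_right (by omega) (le_max_left _ _)
      have e2 : (M + 1) ^ b2 ≤ (M + 1) ^ max b1 b2 :=
        Nat.pow_le_pow_right (by omega) (le_max_right _ _)
      have h1 := le_trans (H1 M) (Nat.mul_le_mul_left a1 e1)
      have h2 := le_trans (H2 M) (Nat.mul_le_mul_left a2 e2)
      show max (t.bnd M) (ps.bnd M) ≤ _
      have : (a1 + a2) * (M + 1) ^ max b1 b2
          = a1 * (M + 1) ^ max b1 b2 + a2 * (M + 1) ^ max b1 b2 := by ring
      rw [this]
      exact max_le (le_trans h1 (Nat.le_add_right _ _)) (le_trans h2 (Nat.le_add_left _ _))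
end

theorem Eval.toEvalN {t ω ω'} (h : Eval t ω ω') : ∃ k, EvalN k t ω ω' := by
  induction h using Eval.rec
    (motive_2 := fun s ps ω ω' _ => ∃ k, EvalListN k s ps ω ω') with
  | skip ω => exact ⟨1, .skip ω⟩
  | seq h1 h2 ih1 ih2 =>
    obtain ⟨k1, e1⟩ := ih1; obtain ⟨k2, e2⟩ := ih2; exact ⟨_, .seq e1 e2⟩
  | push n x φ c => exact ⟨1, .push n x φ c⟩
  | pop n x φ c => exact ⟨1, .pop n x φ c⟩
  | ifeq_true hh h ih => obtain ⟨k, e⟩ := ih; exact ⟨_, .ifeq_true hh e⟩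
  | ifeq_false φ c hn => exact ⟨1, .ifeq_false φ c hn⟩
  | normal h ih => obtain ⟨k, e⟩ := ih; exact ⟨_, .normal e⟩
  | fort h ih => obtain ⟨k, e⟩ := ih; exact ⟨_, .fort e⟩
  | roft h ih => obtain ⟨k, e⟩ := ih; exact ⟨_, .roft e⟩
  | nil ps ω => exact ⟨1, .nil ps ω⟩
  | cons h1 h2 ih1 ih2 =>
    obtain ⟨k1, e1⟩ := ih1; obtain ⟨k2, e2⟩ := ih2; exact ⟨_, .cons e1 e2⟩

theorem raw_bound : ∀ t : Term, t.Raw → t.WF →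
    ∃ a b : ℕ, 1 ≤ a ∧ 1 ≤ b ∧ ∀ (ω ω' : FState) (k : ℕ), EvalN k t ω ω' →
      k ≤ a * ((∑ x ∈ t.regs, (ω.1 x).length) + 1) ^ b
  | .skip, _, _ => ⟨1, 1, le_refl _, le_refl _, fun ω ω' k h => by
      cases h; simp⟩
  | .push n x, _, _ => ⟨1, 1, le_refl _, le_refl _, fun ω ω' k h => by
      cases h; simp⟩
  | .pop n x, _, _ => ⟨1, 1, le_refl _, le_refl _, fun ω ω' k h => by
      cases h; simp⟩
  | .seq t u, hR, hW => by
      obtain ⟨a1, b1, ha1, hb1, H1⟩ := raw_bound t hR.1 hW.1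
      obtain ⟨a2, b2, ha2, hb2, H2⟩ := raw_bound u hR.2 hW.2
      refine ⟨a1 + a2 * (a1 + 1) ^ b2 + 1, b1 * b2, by omega, Nat.one_le_iff_ne_zero.2 (by
        intro h; rcases Nat.mul_eq_zero.1 h with h | h <;> omega), fun ω ω' k h => ?_⟩
      cases h with
      | seq h1 h2 =>
        rename_i k1 k2 ω1
        set N := ∑ x ∈ Term.regs (.seq t u), (ω.1 x).length with hNdef
        have hsub1 : t.regs ⊆ Term.regs (.seq t u) := by
          show t.regs ⊆ t.regs ∪ u.regs
          exact Finset.subset_union_left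
        have hsub2 : u.regs ⊆ Term.regs (.seq t u) := by
          show u.regs ⊆ t.regs ∪ u.regs
          exact Finset.subset_union_right
        have hN1 : ∑ x ∈ t.regs, (ω.1 x).length ≤ N :=
          Finset.sum_le_sum_of_subset hsub1
        have hk1 : k1 ≤ a1 * (N + 1) ^ b1 :=
          le_trans (H1 ω ω1 k1 h1)
            (Nat.mul_le_mul_left a1 (Nat.pow_le_pow_left (by omega) b1))
        have hmid : ∑ x ∈ Term.regs (.seq t u), (ω1.1 x).length ≤ N + k1 := h1.growth _
        have hN2 : ∑ x ∈ u.regs, (ω1.1 x).length ≤ N + k1 :=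
          le_trans (Finset.sum_le_sum_of_subset hsub2) hmid
        have hk2 : k2 ≤ a2 * (N + k1 + 1) ^ b2 :=
          le_trans (H2 ω1 ω' k2 h2)
            (Nat.mul_le_mul_left a2 (Nat.pow_le_pow_left (by omega) b2))
        have hp1 : N + 1 ≤ (N + 1) ^ b1 := Nat.le_self_pow (by omega) _
        have hNk : N + k1 + 1 ≤ (a1 + 1) * (N + 1) ^ b1 := by nlinarith
        have hk2' : k2 ≤ a2 * ((a1 + 1) ^ b2 * (N + 1) ^ (b1 * b2)) := by
          refine le_trans hk2 (Nat.mul_le_mul_left a2 ?_)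
          calc (N + k1 + 1) ^ b2 ≤ ((a1 + 1) * (N + 1) ^ b1) ^ b2 :=
                Nat.pow_le_pow_left hNk b2
            _ = (a1 + 1) ^ b2 * (N + 1) ^ (b1 * b2) := by
                rw [mul_pow, ← pow_mul]
        have hk1' : k1 ≤ a1 * (N + 1) ^ (b1 * b2) := by
          refine le_trans hk1 (Nat.mul_le_mul_left a1 ?_)
          exact Nat.pow_le_pow_right (by omega) (Nat.le_mul_of_pos_right b1 (by omega))
        have hQ : 1 ≤ (N + 1) ^ (b1 * b2) := Nat.one_le_pow _ _ (by omega)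
        nlinarith
  | .ifeq x n t, hR, hW => by
      obtain ⟨a, b, ha, hb, H⟩ := raw_bound t hR hW.1
      refine ⟨a + 1, b, by omega, hb, fun ω ω' k h => ?_⟩
      have hsub : t.regs ⊆ Term.regs (.ifeq x n t) := by
        show t.regs ⊆ insert x t.regs
        exact Finset.subset_insert _ _
      cases h with
      | ifeq_true hh h' =>
        rename_i k' φ c
        set N := ∑ x ∈ Term.regs (.ifeq x n t), (((φ, c) : FState).1 x).length with hNdef
        have hN : ∑ y ∈ t.regs, (((φ, c) : FState).1 y).length ≤ N :=
          Finset.sum_le_sum_of_subset hsub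
        have hk : k' ≤ a * (N + 1) ^ b :=
          le_trans (H (φ, c) ω' k' h')
            (Nat.mul_le_mul_left a (Nat.pow_le_pow_left (by omega) b))
        have hQ : 1 ≤ (N + 1) ^ b := Nat.one_le_pow _ _ (by omega)
        nlinarith
      | ifeq_false φ c hn =>
        have hQ : 1 ≤ ((∑ x ∈ Term.regs (.ifeq x n t), (((φ, c) : FState).1 x).length) + 1) ^ b :=
          Nat.one_le_pow _ _ (by omega)
        nlinarith
  | .normal xs t, hR, hWF => by
      obtain ⟨a, b, ha, hb, H⟩ := t.bnd_poly
      refine ⟨a + 1, b, by omega, hb, fun ω ω' k h => ?_⟩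
      cases h with
      | normal h' =>
        rename_i k'
        set N := ∑ x ∈ Term.regs (.normal xs t), (ω.1 x).length with hNdef
        have hlen : ∀ y, y ∈ xs → (ω.1 y).length ≤ N := by
          intro y hy
          apply Finset.single_le_sum (f := fun x => (ω.1 x).length)
            (fun _ _ => Nat.zero_le _)
          show y ∈ xs.toFinset ∪ t.regs
          exact Finset.mem_union.2 (Or.inl (List.mem_toFinset.2 hy))
        have hk := h'.bnd_spec N (· ∈ xs) hWF.2.2 (fun y hy => hWF.2.1 y hy) hlen
        have hB := H N
        have hQ : 1 ≤ (N + 1) ^ b := Nat.one_le_pow _ _ (by omega)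
        nlinarith
  | .fort _ _, hR, _ => hR.elim
  | .roft _ _, hR, _ => hR.elim

end ForNo
open ForNo in
/-- Polynomial bound on ForNo computations: for every ForNo term
there is a polynomial bounding both the size of evaluation derivations and the
total length of the final stacks in terms of the total length of the initial
stacks of the registers occurring in the term. -/
theorem forno_polynomial_bound (T : Term) (hT : InForNo T) :
    ∃ q : Polynomial ℕ, ∀ ω ω' : FState, Eval T ω ω' →
      (∀ k : ℕ, EvalN k T ω ω' →
        k ≤ q.eval (∑ x ∈ T.regs, (ω.1 x).length)) ∧
      (∑ x ∈ T.regs, (ω'.1 x).length ≤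
        q.eval (∑ x ∈ T.regs, (ω.1 x).length)) := by
  obtain ⟨a, b, ha, hb, H⟩ := raw_bound T hT.1 hT.2
  refine ⟨Polynomial.C a * (Polynomial.X + 1) ^ b + Polynomial.X, fun ω ω' hev => ?_⟩
  have heval : (Polynomial.C a * (Polynomial.X + 1) ^ b + Polynomial.X : Polynomial ℕ).eval
      (∑ x ∈ T.regs, (ω.1 x).length)
      = a * ((∑ x ∈ T.regs, (ω.1 x).length) + 1) ^ b + (∑ x ∈ T.regs, (ω.1 x).length) := by
    simp
  rw [heval]
  constructor
  · intro k hk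
    exact le_trans (H ω ω' k hk) (Nat.le_add_right _ _)
  · obtain ⟨k, hk⟩ := hev.toEvalN
    have h1 := hk.growth T.regs
    have h2 := H ω ω' k hk
    set P := a * ((∑ x ∈ T.regs, (ω.1 x).length) + 1) ^ b with hP
    omega
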